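/- In the same setting (E ∈ B⊗C separability idempotent with S_B, S_C and counit ε_P), the map S_P : P → P on P = C⊗B defined by S_P(c⊗b) = S_B(b) ⊗ S_C(c) is an algebra anti-homomorphism, provided the images of S_B and S_C land in C and B respectively (regularity). Moreover, writing E = Σᵢ bᵢ⊗cᵢ and assuming Σᵢ bᵢ S_C(cᵢ) = 1_B and Σᵢ S_B(bᵢ) cᵢ = 1_C, the weak antipode identities hold: Σ (first leg of Δ_P)·S_P(second leg) applied to c⊗b gives Σᵢ (c⊗bᵢ)·S_P(cᵢ⊗b) = cS_B(b) ⊗ 1_B, and Σᵢ S_P(c⊗bᵢ)·(cᵢ⊗b) = 1_C ⊗ S_C(c)b. -/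
import Mathlib


open scoped TensorProduct

variable (B C : Type*) [Ring B] [Algebra ℂ B] [Ring C] [Algebra ℂ C]

/-- The coproduct `Δ_P : C ⊗ B → (C ⊗ B) ⊗ (C ⊗ B)`, `c ⊗ b ↦ c ⊗ E ⊗ b`. -/
noncomputable def DeltaP (E : B ⊗[ℂ] C) :
    (C ⊗[ℂ] B) →ₗ[ℂ] (C ⊗[ℂ] B) ⊗[ℂ] (C ⊗[ℂ] B) :=
  (TensorProduct.assoc ℂ (C ⊗[ℂ] B) C B).toLinearMap ∘ₗ
    (TensorProduct.congr ((TensorProduct.assoc ℂ C B C).symm)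
      (LinearEquiv.refl ℂ B)).toLinearMap ∘ₗ
    (TensorProduct.assoc ℂ C (B ⊗[ℂ] C) B).symm.toLinearMap ∘ₗ
    TensorProduct.map LinearMap.id (TensorProduct.mk ℂ (B ⊗[ℂ] C) B E)

/-- The antipode `S_P : C ⊗ B → C ⊗ B`, `c ⊗ b ↦ S_B(b) ⊗ S_C(c)`. -/
noncomputable def SP (SB : B →ₗ[ℂ] C) (SC : C →ₗ[ℂ] B) :
    (C ⊗[ℂ] B) →ₗ[ℂ] (C ⊗[ℂ] B) :=
  TensorProduct.map SB SC ∘ₗ (TensorProduct.comm ℂ C B).toLinearMap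

lemma DeltaP_tmul (e : B ⊗[ℂ] C) (c : C) (b : B) :
    DeltaP B C e (c ⊗ₜ[ℂ] b) =
      (TensorProduct.assoc ℂ (C ⊗[ℂ] B) C B)
        ((TensorProduct.congr ((TensorProduct.assoc ℂ C B C).symm) (LinearEquiv.refl ℂ B))
          ((TensorProduct.assoc ℂ C (B ⊗[ℂ] C) B).symm (c ⊗ₜ[ℂ] (e ⊗ₜ[ℂ] b)))) := rfl

lemma DeltaP_add (e e' : B ⊗[ℂ] C) (x : C ⊗[ℂ] B) :
    DeltaP B C (e + e') x = DeltaP B C e x + DeltaP B C e' x := by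
  induction x using TensorProduct.induction_on with
  | zero => simp
  | tmul c b =>
      rw [DeltaP_tmul, DeltaP_tmul, DeltaP_tmul, TensorProduct.add_tmul,
        TensorProduct.tmul_add, LinearEquiv.map_add, LinearEquiv.map_add, LinearEquiv.map_add]
  | add x y hx hy => simp only [map_add, hx, hy]; abel

lemma DeltaP_zero (x : C ⊗[ℂ] B) : DeltaP B C 0 x = 0 := by
  induction x using TensorProduct.induction_on with
  | zero => simp
  | tmul c b => simp [DeltaP]
  | add x y hx hy => simp [map_add, hx, hy]

lemma aux2 (SB : B →ₗ[ℂ] C) (SC : C →ₗ[ℂ] B) (c : C) (b : B) (e : B ⊗[ℂ] C) :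
    LinearMap.mul' ℂ (C ⊗[ℂ] B)
        (TensorProduct.map LinearMap.id (SP B C SB SC) (DeltaP B C e (c ⊗ₜ[ℂ] b)))
      = (c * SB b) ⊗ₜ[ℂ] (LinearMap.mul' ℂ B (TensorProduct.map LinearMap.id SC e)) := by
  induction e using TensorProduct.induction_on with
  | zero => simp [DeltaP_zero]
  | tmul b1 c1 =>
      have h : DeltaP B C (b1 ⊗ₜ c1) (c ⊗ₜ b) = (c ⊗ₜ b1) ⊗ₜ (c1 ⊗ₜ b) := by
        simp [DeltaP]
      rw [h]
      simp [SP, Algebra.TensorProduct.tmul_mul_tmul]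
  | add x y hx hy =>
      rw [DeltaP_add]
      simp [map_add, hx, hy, TensorProduct.tmul_add]

lemma aux3 (SB : B →ₗ[ℂ] C) (SC : C →ₗ[ℂ] B) (c : C) (b : B) (e : B ⊗[ℂ] C) :
    LinearMap.mul' ℂ (C ⊗[ℂ] B)
        (TensorProduct.map (SP B C SB SC) LinearMap.id (DeltaP B C e (c ⊗ₜ[ℂ] b)))
      = (LinearMap.mul' ℂ C (TensorProduct.map SB LinearMap.id e)) ⊗ₜ[ℂ] (SC c * b) := by
  induction e using TensorProduct.induction_on with
  | zero => simp [DeltaP_zero]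
  | tmul b1 c1 =>
      have h : DeltaP B C (b1 ⊗ₜ c1) (c ⊗ₜ b) = (c ⊗ₜ b1) ⊗ₜ (c1 ⊗ₜ b) := by
        simp [DeltaP]
      rw [h]
      simp [SP, Algebra.TensorProduct.tmul_mul_tmul]
  | add x y hx hy =>
      rw [DeltaP_add]
      simp [map_add, hx, hy, TensorProduct.add_tmul]

/-- for a (regular) separability idempotent `E ∈ B ⊗ C` with
antipodal anti-homomorphisms `S_B : B → C`, `S_C : C → B` and normalizations
`Σᵢ bᵢ S_C(cᵢ) = 1_B`, `Σᵢ S_B(bᵢ) cᵢ = 1_C`, the map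
`S_P(c⊗b) = S_B(b) ⊗ S_C(c)` is an anti-homomorphism of `P = C ⊗ B`, and the
weak antipode identities hold:
`m∘(id⊗S_P)∘Δ_P (c⊗b) = c S_B(b) ⊗ 1` and `m∘(S_P⊗id)∘Δ_P (c⊗b) = 1 ⊗ S_C(c) b`. -/
theorem stmt12 (E : B ⊗[ℂ] C) (hE : E * E = E)
    (SB : B →ₗ[ℂ] C) (SB_anti : ∀ b b' : B, SB (b * b') = SB b' * SB b)
    (SC : C →ₗ[ℂ] B) (SC_anti : ∀ c c' : C, SC (c * c') = SC c' * SC c)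
    (hSB : ∀ b : B, E * (b ⊗ₜ[ℂ] (1 : C)) = E * ((1 : B) ⊗ₜ[ℂ] SB b))
    (hSC : ∀ c : C, ((1 : B) ⊗ₜ[ℂ] c) * E = (SC c ⊗ₜ[ℂ] (1 : C)) * E)
    (hnormB : LinearMap.mul' ℂ B (TensorProduct.map LinearMap.id SC E) = 1)
    (hnormC : LinearMap.mul' ℂ C (TensorProduct.map SB LinearMap.id E) = 1) :
    (∀ x y : C ⊗[ℂ] B, SP B C SB SC (x * y) = SP B C SB SC y * SP B C SB SC x) ∧
    (∀ (c : C) (b : B),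
      LinearMap.mul' ℂ (C ⊗[ℂ] B)
          (TensorProduct.map LinearMap.id (SP B C SB SC) (DeltaP B C E (c ⊗ₜ[ℂ] b)))
        = (c * SB b) ⊗ₜ[ℂ] (1 : B)) ∧
    (∀ (c : C) (b : B),
      LinearMap.mul' ℂ (C ⊗[ℂ] B)
          (TensorProduct.map (SP B C SB SC) LinearMap.id (DeltaP B C E (c ⊗ₜ[ℂ] b)))
        = (1 : C) ⊗ₜ[ℂ] (SC c * b)) := by
  refine ⟨?_, ?_, ?_⟩
  · intro x y
    induction x using TensorProduct.induction_on with
    | zero => simp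
    | add x x' hx hx' => simp [add_mul, mul_add, hx, hx']
    | tmul c b =>
      induction y using TensorProduct.induction_on with
      | zero => simp
      | add y y' hy hy' => simp [add_mul, mul_add, hy, hy']
      | tmul c' b' =>
          simp [SP, Algebra.TensorProduct.tmul_mul_tmul, SB_anti, SC_anti]
  · intro c b
    rw [aux2, hnormB]
  · intro c b
    rw [aux3, hnormC]
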